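/- Let H be a Hopf-Galois algebra with Hopf-Galois map μ. If there exists an algebra map α : H → k, then H is a Hopf algebra with counit α, comultiplication Δ(x) = α(x₍₂₎) x₍₁₎ ⊗ x₍₃₎, and antipode S(x) = α(x₍₁₎x₍₃₎) x₍₂₎. -/
import Mathlib


open TensorProduct MulOpposite

noncomputable section

variable (k : Type*) [Field k]
variable (H : Type*) [Ring H] [Algebra k H]

abbrev HG3 := H ⊗[k] (Hᵐᵒᵖ ⊗[k] H)

def unopL : Hᵐᵒᵖ →ₗ[k] H := (opLinearEquiv k : H ≃ₗ[k] Hᵐᵒᵖ).symm.toLinearMap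

@[simp] lemma unopL_apply (m : Hᵐᵒᵖ) : unopL k H m = m.unop := rfl

def rightContr : HG3 k H →ₗ[k] H ⊗[k] H :=
  TensorProduct.map LinearMap.id
    (LinearMap.mul' k H ∘ₗ TensorProduct.map (unopL k H) LinearMap.id)

def leftContr : HG3 k H →ₗ[k] H ⊗[k] H :=
  (TensorProduct.map
      (LinearMap.mul' k H ∘ₗ TensorProduct.map LinearMap.id (unopL k H)) LinearMap.id)
    ∘ₗ (TensorProduct.assoc k H Hᵐᵒᵖ H).symm.toLinearMap

@[simp] lemma rightContr_tmul (a : H) (m : Hᵐᵒᵖ) (b : H) :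
    rightContr k H (a ⊗ₜ (m ⊗ₜ b)) = a ⊗ₜ (m.unop * b) := by
  simp [rightContr]

@[simp] lemma leftContr_tmul (a : H) (m : Hᵐᵒᵖ) (b : H) :
    leftContr k H (a ⊗ₜ (m ⊗ₜ b)) = (a * m.unop) ⊗ₜ b := by
  simp [leftContr]

structure IsHopfGaloisMap (μ : H →ₐ[k] HG3 k H) : Prop where
  coassoc :
    (TensorProduct.map LinearMap.id (TensorProduct.map LinearMap.id μ.toLinearMap))
        ∘ₗ μ.toLinearMap =
      (TensorProduct.map LinearMap.id
          (TensorProduct.assoc k Hᵐᵒᵖ H (Hᵐᵒᵖ ⊗[k] H)).toLinearMap)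
        ∘ₗ (TensorProduct.assoc k H (Hᵐᵒᵖ ⊗[k] H) (Hᵐᵒᵖ ⊗[k] H)).toLinearMap
        ∘ₗ (TensorProduct.map μ.toLinearMap LinearMap.id)
        ∘ₗ μ.toLinearMap
  counit_right : ∀ r : H, rightContr k H (μ r) = r ⊗ₜ[k] (1 : H)
  counit_left : ∀ r : H, leftContr k H (μ r) = (1 : H) ⊗ₜ[k] r

/-- The comultiplication `Δ(x) = α(x₍₂₎) x₍₁₎ ⊗ x₍₃₎` built from `μ` and `α`. -/
def comulOf (μ : H →ₐ[k] HG3 k H) (α : H →ₐ[k] k) : H →ₗ[k] H ⊗[k] H :=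
  (TensorProduct.map LinearMap.id
      ((TensorProduct.lid k H).toLinearMap
        ∘ₗ TensorProduct.map (α.toLinearMap ∘ₗ unopL k H) LinearMap.id))
    ∘ₗ μ.toLinearMap

/-- The antipode `S(x) = α(x₍₁₎x₍₃₎) x₍₂₎ = α(x₍₁₎)α(x₍₃₎) x₍₂₎` built from `μ` and `α`. -/
def antipodeOf (μ : H →ₐ[k] HG3 k H) (α : H →ₐ[k] k) : H →ₗ[k] H :=
  (TensorProduct.rid k H).toLinearMap
    ∘ₗ (TensorProduct.lid k (H ⊗[k] k)).toLinearMap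
    ∘ₗ (TensorProduct.map α.toLinearMap
          (TensorProduct.map (unopL k H) α.toLinearMap))
    ∘ₗ μ.toLinearMap

section Aux

variable (α : H →ₐ[k] k)

/-- contraction of an `Hᵐᵒᵖ` factor by `α`. -/
def ctrOp (N : Type*) [AddCommGroup N] [Module k N] : Hᵐᵒᵖ ⊗[k] N →ₗ[k] N :=
  (TensorProduct.lid k N).toLinearMap ∘ₗ
    TensorProduct.map (α.toLinearMap ∘ₗ unopL k H) LinearMap.id

@[simp] lemma ctrOp_tmul (N : Type*) [AddCommGroup N] [Module k N] (m : Hᵐᵒᵖ) (n : N) :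
    ctrOp k H α N (m ⊗ₜ n) = α m.unop • n := by simp [ctrOp]

/-- contraction of an `H` factor by `α`. -/
def ctrH (N : Type*) [AddCommGroup N] [Module k N] : H ⊗[k] N →ₗ[k] N :=
  (TensorProduct.lid k N).toLinearMap ∘ₗ TensorProduct.map α.toLinearMap LinearMap.id

@[simp] lemma ctrH_tmul (N : Type*) [AddCommGroup N] [Module k N] (a : H) (n : N) :
    ctrH k H α N (a ⊗ₜ n) = α a • n := by simp [ctrH]

/-- the "antipode kernel" map `a ⊗ (m ⊗ b) ↦ α(a) α(b) • m.unop`. -/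
def sL : HG3 k H →ₗ[k] H :=
  (TensorProduct.rid k H).toLinearMap
    ∘ₗ (TensorProduct.lid k (H ⊗[k] k)).toLinearMap
    ∘ₗ (TensorProduct.map α.toLinearMap
          (TensorProduct.map (unopL k H) α.toLinearMap))

@[simp] lemma sL_tmul (a : H) (m : Hᵐᵒᵖ) (b : H) :
    sL k H α (a ⊗ₜ (m ⊗ₜ b)) = α a • α b • m.unop := by
  simp [sL, TensorProduct.smul_tmul', smul_smul, mul_comm]

def alphaOp : Hᵐᵒᵖ →ₐ[k] k where
  toFun m := α m.unop
  map_one' := by simp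
  map_mul' x y := by simp [mul_comm]
  map_zero' := by simp
  map_add' x y := by simp
  commutes' r := by simp [MulOpposite.algebraMap_apply]

@[simp] lemma alphaOp_apply (m : Hᵐᵒᵖ) : alphaOp k H α m = α m.unop := rfl

variable (μ : H →ₐ[k] HG3 k H)

lemma comulOf_def : comulOf k H μ α =
    TensorProduct.map LinearMap.id (ctrOp k H α H) ∘ₗ μ.toLinearMap := rfl

lemma antipodeOf_def : antipodeOf k H μ α = sL k H α ∘ₗ μ.toLinearMap := rfl

def comulAlg : H →ₐ[k] H ⊗[k] H :=
  (Algebra.TensorProduct.map (AlgHom.id k H)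
    ((Algebra.TensorProduct.lid k H).toAlgHom.comp
      (Algebra.TensorProduct.map (alphaOp k H α) (AlgHom.id k H)))).comp μ

lemma comulOf_eq_alg : ∀ x, comulOf k H μ α x = comulAlg k H α μ x := by
  intro x
  rw [comulOf_def]
  have h : TensorProduct.map LinearMap.id (ctrOp k H α H) =
      (Algebra.TensorProduct.map (AlgHom.id k H)
        ((Algebra.TensorProduct.lid k H).toAlgHom.comp
          (Algebra.TensorProduct.map (alphaOp k H α) (AlgHom.id k H)))).toLinearMap := by
    ext a m b
    simp [Algebra.TensorProduct.lid_tmul]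
  simp only [LinearMap.comp_apply, h, comulAlg, AlgHom.comp_apply]
  rfl


lemma L1 : TensorProduct.map (comulOf k H μ α) LinearMap.id
      ∘ₗ TensorProduct.map LinearMap.id (ctrOp k H α H) =
    TensorProduct.map (TensorProduct.map LinearMap.id (ctrOp k H α H)) (ctrOp k H α H)
      ∘ₗ TensorProduct.map μ.toLinearMap LinearMap.id := by
  ext a m b
  simp [comulOf_def]

lemma L2 : TensorProduct.map (LinearMap.id : H →ₗ[k] H) (comulOf k H μ α)
      ∘ₗ TensorProduct.map LinearMap.id (ctrOp k H α H) =
    TensorProduct.map (LinearMap.id : H →ₗ[k] H)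
        (TensorProduct.map LinearMap.id (ctrOp k H α H) ∘ₗ ctrOp k H α (HG3 k H))
      ∘ₗ TensorProduct.map LinearMap.id (TensorProduct.map LinearMap.id μ.toLinearMap) := by
  ext a m b
  simp [comulOf_def]

lemma L3 : (TensorProduct.assoc k H H H).toLinearMap
      ∘ₗ TensorProduct.map (TensorProduct.map LinearMap.id (ctrOp k H α H)) (ctrOp k H α H) =
    TensorProduct.map LinearMap.id
        (TensorProduct.map LinearMap.id (ctrOp k H α H) ∘ₗ ctrOp k H α (HG3 k H))
      ∘ₗ (TensorProduct.map LinearMap.id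
            (TensorProduct.assoc k Hᵐᵒᵖ H (Hᵐᵒᵖ ⊗[k] H)).toLinearMap)
      ∘ₗ (TensorProduct.assoc k H (Hᵐᵒᵖ ⊗[k] H) (Hᵐᵒᵖ ⊗[k] H)).toLinearMap := by
  ext a m b n c
  simp [TensorProduct.smul_tmul', tmul_smul, smul_smul, mul_comm]
  rw [TensorProduct.smul_tmul, TensorProduct.smul_tmul']

set_option maxHeartbeats 1000000 in
lemma L4 : (TensorProduct.lid k H).toLinearMap
      ∘ₗ TensorProduct.map α.toLinearMap LinearMap.id
      ∘ₗ TensorProduct.map LinearMap.id (ctrOp k H α H) =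
    (TensorProduct.lid k H).toLinearMap
      ∘ₗ TensorProduct.map α.toLinearMap LinearMap.id ∘ₗ leftContr k H := by
  ext a m b
  simp [map_mul, smul_smul, mul_comm]

lemma L5 : (TensorProduct.rid k H).toLinearMap
      ∘ₗ TensorProduct.map LinearMap.id α.toLinearMap
      ∘ₗ TensorProduct.map LinearMap.id (ctrOp k H α H) =
    (TensorProduct.rid k H).toLinearMap
      ∘ₗ TensorProduct.map LinearMap.id α.toLinearMap ∘ₗ rightContr k H := by
  ext a m b
  simp [map_mul, smul_smul, mul_comm]

def K6 : H ⊗[k] (Hᵐᵒᵖ ⊗[k] (H ⊗[k] H)) →ₗ[k] H :=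
  (LinearMap.mul' k H ∘ₗ TensorProduct.map (unopL k H) (ctrH k H α H))
    ∘ₗ ctrH k H α (Hᵐᵒᵖ ⊗[k] (H ⊗[k] H))

@[simp] lemma K6_tmul (a : H) (m : Hᵐᵒᵖ) (u v : H) :
    K6 k H α (a ⊗ₜ (m ⊗ₜ (u ⊗ₜ v))) = α a • α u • (m.unop * v) := by
  simp [K6, TensorProduct.smul_tmul', tmul_smul, smul_smul, mul_comm]

lemma L6a : LinearMap.mul' k H
      ∘ₗ TensorProduct.map (antipodeOf k H μ α) LinearMap.id
      ∘ₗ TensorProduct.map LinearMap.id (ctrOp k H α H) =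
    (LinearMap.mul' k H ∘ₗ TensorProduct.map (sL k H α) (ctrOp k H α H))
      ∘ₗ TensorProduct.map μ.toLinearMap LinearMap.id := by
  ext a m b
  simp [antipodeOf_def]

lemma L6b : LinearMap.mul' k H ∘ₗ TensorProduct.map (sL k H α) (ctrOp k H α H) =
    K6 k H α
      ∘ₗ TensorProduct.map LinearMap.id (TensorProduct.map LinearMap.id (leftContr k H))
      ∘ₗ (TensorProduct.map LinearMap.id
            (TensorProduct.assoc k Hᵐᵒᵖ H (Hᵐᵒᵖ ⊗[k] H)).toLinearMap)
      ∘ₗ (TensorProduct.assoc k H (Hᵐᵒᵖ ⊗[k] H) (Hᵐᵒᵖ ⊗[k] H)).toLinearMap := by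
  ext a m b n c
  simp [map_mul, TensorProduct.smul_tmul', tmul_smul, smul_smul, mul_comm, mul_left_comm]

lemma L6c : K6 k H α
      ∘ₗ TensorProduct.map LinearMap.id
          (TensorProduct.map LinearMap.id (TensorProduct.mk k H H 1)) =
    (TensorProduct.lid k H).toLinearMap
      ∘ₗ TensorProduct.map α.toLinearMap LinearMap.id ∘ₗ rightContr k H := by
  ext a m b
  simp

def K7 : (H ⊗[k] H) ⊗[k] (Hᵐᵒᵖ ⊗[k] H) →ₗ[k] H :=
  LinearMap.mul' k H ∘ₗ TensorProduct.map
    ((TensorProduct.rid k H).toLinearMap ∘ₗ TensorProduct.map LinearMap.id α.toLinearMap)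
    ((TensorProduct.rid k H).toLinearMap ∘ₗ TensorProduct.map (unopL k H) α.toLinearMap)

@[simp] lemma K7_tmul (a u : H) (m : Hᵐᵒᵖ) (b : H) :
    K7 k H α ((a ⊗ₜ u) ⊗ₜ (m ⊗ₜ b)) = α u • α b • (a * m.unop) := by
  simp [K7, smul_smul, smul_mul_assoc, mul_smul_comm, mul_comm]

lemma L7a : LinearMap.mul' k H
      ∘ₗ TensorProduct.map LinearMap.id (antipodeOf k H μ α)
      ∘ₗ TensorProduct.map LinearMap.id (ctrOp k H α H) =
    (LinearMap.mul' k H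
        ∘ₗ TensorProduct.map LinearMap.id (sL k H α ∘ₗ ctrOp k H α (HG3 k H)))
      ∘ₗ TensorProduct.map LinearMap.id (TensorProduct.map LinearMap.id μ.toLinearMap) := by
  ext a m b
  simp [antipodeOf_def]

lemma L7b : (LinearMap.mul' k H
        ∘ₗ TensorProduct.map LinearMap.id (sL k H α ∘ₗ ctrOp k H α (HG3 k H)))
      ∘ₗ (TensorProduct.map LinearMap.id
            (TensorProduct.assoc k Hᵐᵒᵖ H (Hᵐᵒᵖ ⊗[k] H)).toLinearMap)
      ∘ₗ (TensorProduct.assoc k H (Hᵐᵒᵖ ⊗[k] H) (Hᵐᵒᵖ ⊗[k] H)).toLinearMap =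
    K7 k H α ∘ₗ TensorProduct.map (rightContr k H) LinearMap.id := by
  ext a m b n c
  simp [map_mul, TensorProduct.smul_tmul', tmul_smul, smul_smul, mul_comm, mul_left_comm]

lemma L7c : K7 k H α
      ∘ₗ TensorProduct.map ((TensorProduct.mk k H H).flip 1) LinearMap.id =
    (TensorProduct.rid k H).toLinearMap
      ∘ₗ TensorProduct.map LinearMap.id α.toLinearMap ∘ₗ leftContr k H := by
  ext a m b
  simp

end Aux
set_option maxHeartbeats 2000000
/-- If `H` is a Hopf-Galois algebra admitting an algebra map `α : H → k`, then `H` is a Hopf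
algebra with counit `α`, comultiplication `Δ(x) = α(x₍₂₎) x₍₁₎ ⊗ x₍₃₎` and antipode
`S(x) = α(x₍₁₎x₍₃₎) x₍₂₎`: `Δ` is an algebra map, coassociative, `α` is a counit for `Δ`, and
`S` satisfies the antipode axioms. -/
theorem stmt2 [Nontrivial H] (μ : H →ₐ[k] HG3 k H) (hμ : IsHopfGaloisMap k H μ)
    (α : H →ₐ[k] k) :
    (∀ x y : H, comulOf k H μ α (x * y) = comulOf k H μ α x * comulOf k H μ α y) ∧
    comulOf k H μ α 1 = 1 ∧
    ((TensorProduct.assoc k H H H).toLinearMap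
        ∘ₗ (TensorProduct.map (comulOf k H μ α) LinearMap.id) ∘ₗ comulOf k H μ α =
      (TensorProduct.map LinearMap.id (comulOf k H μ α)) ∘ₗ comulOf k H μ α) ∧
    (∀ x : H, (TensorProduct.lid k H)
        ((TensorProduct.map α.toLinearMap LinearMap.id) (comulOf k H μ α x)) = x) ∧
    (∀ x : H, (TensorProduct.rid k H)
        ((TensorProduct.map LinearMap.id α.toLinearMap) (comulOf k H μ α x)) = x) ∧
    (∀ x : H, LinearMap.mul' k H
        ((TensorProduct.map (antipodeOf k H μ α) LinearMap.id) (comulOf k H μ α x)) =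
      algebraMap k H (α x)) ∧
    (∀ x : H, LinearMap.mul' k H
        ((TensorProduct.map LinearMap.id (antipodeOf k H μ α)) (comulOf k H μ α x)) =
      algebraMap k H (α x)) := by
  obtain ⟨hco, hr, hl⟩ := hμ
  have hΔ : ∀ y : H, comulOf k H μ α y =
      TensorProduct.map LinearMap.id (ctrOp k H α H) (μ y) := fun y => by
    rw [comulOf_def]; rfl
  have hcombL : TensorProduct.map (LinearMap.id : H →ₗ[k] H)
        (TensorProduct.map (LinearMap.id : Hᵐᵒᵖ →ₗ[k] Hᵐᵒᵖ) (leftContr k H))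
      ∘ₗ TensorProduct.map LinearMap.id (TensorProduct.map LinearMap.id μ.toLinearMap) =
      TensorProduct.map LinearMap.id
        (TensorProduct.map LinearMap.id (TensorProduct.mk k H H 1)) := by
    ext a m b
    simp [hl b]
  have hcombR : TensorProduct.map (rightContr k H) (LinearMap.id : Hᵐᵒᵖ ⊗[k] H →ₗ[k] _)
      ∘ₗ TensorProduct.map μ.toLinearMap LinearMap.id =
      TensorProduct.map ((TensorProduct.mk k H H).flip 1) LinearMap.id := by
    ext a m b
    simp [hr a]
  refine ⟨?_, ?_, ?_, ?_, ?_, ?_, ?_⟩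
  · intro x y
    rw [comulOf_eq_alg, comulOf_eq_alg, comulOf_eq_alg, map_mul]
  · rw [comulOf_eq_alg, map_one]
  · refine LinearMap.ext fun x => ?_
    have hx := LinearMap.congr_fun hco x
    have h1 := LinearMap.congr_fun (L1 k H α μ) (μ x)
    have h2 := LinearMap.congr_fun (L2 k H α μ) (μ x)
    have h3 := LinearMap.congr_fun (L3 k H α)
      (TensorProduct.map μ.toLinearMap LinearMap.id (μ x))
    simp only [LinearMap.comp_apply, LinearEquiv.coe_coe, AlgHom.toLinearMap_apply]
      at hx h1 h2 h3 ⊢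
    rw [hΔ x, h1, h3, ← hx, h2]
  · intro x
    have h4 := LinearMap.congr_fun (L4 k H α) (μ x)
    simp only [LinearMap.comp_apply, LinearEquiv.coe_coe] at h4
    rw [hΔ x, h4, hl x]
    simp
  · intro x
    have h5 := LinearMap.congr_fun (L5 k H α) (μ x)
    simp only [LinearMap.comp_apply, LinearEquiv.coe_coe] at h5
    rw [hΔ x, h5, hr x]
    simp
  · intro x
    have hx := LinearMap.congr_fun hco x
    have h6a := LinearMap.congr_fun (L6a k H α μ) (μ x)
    have h6b := LinearMap.congr_fun (L6b k H α)
      (TensorProduct.map μ.toLinearMap LinearMap.id (μ x))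
    have h6c := LinearMap.congr_fun (L6c k H α) (μ x)
    have hcl := LinearMap.congr_fun hcombL (μ x)
    simp only [LinearMap.comp_apply, LinearEquiv.coe_coe, AlgHom.toLinearMap_apply]
      at hx h6a h6b h6c hcl
    rw [hΔ x, h6a, h6b, ← hx, hcl, h6c, hr x]
    simp [Algebra.algebraMap_eq_smul_one]
  · intro x
    have hx := LinearMap.congr_fun hco x
    have h7a := LinearMap.congr_fun (L7a k H α μ) (μ x)
    have h7b := LinearMap.congr_fun (L7b k H α)
      (TensorProduct.map μ.toLinearMap LinearMap.id (μ x))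
    have h7c := LinearMap.congr_fun (L7c k H α) (μ x)
    have hcr := LinearMap.congr_fun hcombR (μ x)
    simp only [LinearMap.comp_apply, LinearEquiv.coe_coe, AlgHom.toLinearMap_apply]
      at hx h7a h7b h7c hcr
    rw [hΔ x, h7a, hx, h7b, hcr, h7c, hl x]
    simp [Algebra.algebraMap_eq_smul_one]
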